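/- Between any two distinct vertices of G̅_q there is a unique minimum path; in particular, G̅_q contains no 4-cycle and has diameter 2. -/

import Mathlib

open Projectivization

/-- Orthogonality of projective points: scalar product of representatives is zero. -/
def ortho {F : Type} [Field F] (P L : Projectivization F (Fin 3 → F)) : Prop :=
  dotProduct P.rep L.rep = 0

instance {F : Type} [Field F] [Finite F] :
    Finite (Projectivization F (Fin 3 → F)) := Quotient.finite _

noncomputable instance {F : Type} [Field F] [Fintype F] :
    Fintype (Projectivization F (Fin 3 → F)) := Fintype.ofFinite _

/-- The incidence graph `G_q` of the projective plane over `F`. -/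
def projGraph (F : Type) [Field F] :
    SimpleGraph (Bool × Projectivization F (Fin 3 → F)) where
  Adj v w := v.1 ≠ w.1 ∧ ortho v.2 w.2
  symm := ⟨by
    rintro ⟨s, P⟩ ⟨t, L⟩ ⟨h1, h2⟩
    exact ⟨h1.symm, by rwa [ortho, dotProduct_comm]⟩⟩
  loopless := ⟨by rintro ⟨s, P⟩ ⟨h, _⟩; exact h rfl⟩

/-- The modified incidence (polarity) graph `G̅_q` of the projective plane over `F`. -/
def polarityGraph (F : Type) [Field F] :
    SimpleGraph (Projectivization F (Fin 3 → F)) where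
  Adj P L := P ≠ L ∧ ortho P L
  symm := ⟨by
    rintro P L ⟨h1, h2⟩
    exact ⟨h1.symm, by rwa [ortho, dotProduct_comm]⟩⟩
  loopless := ⟨by rintro P ⟨h, _⟩; exact h rfl⟩


section Helpers

open Matrix

variable {F : Type} [Field F]

lemma cross_ne_zero_of_li {a b : Fin 3 → F} (h : LinearIndependent F ![a, b]) :
    a ⨯₃ b ≠ 0 := by
  intro hc
  classical
  obtain ⟨z, hz⟩ : ∃ z, z ∉ Submodule.span F ({a, b} : Set (Fin 3 → F)) := by
    have hlt : Submodule.span F ({a, b} : Set (Fin 3 → F)) < ⊤ := by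
      apply span_lt_top_of_card_lt_finrank
      have h2 : (Set.toFinset ({a, b} : Set (Fin 3 → F))).card ≤ 2 := by
        rw [Set.toFinset_insert, Set.toFinset_singleton]
        exact (Finset.card_insert_le _ _).trans (by simp)
      have h3 : Module.finrank F (Fin 3 → F) = 3 := by
        simp [Module.finrank_pi]
      omega
    obtain ⟨z, -, hz⟩ := SetLike.exists_of_lt hlt
    exact ⟨z, hz⟩
  have hli : LinearIndependent F ![z, a, b] := by
    rw [show (![z, a, b] : Fin 3 → Fin 3 → F) = Fin.cons z ![a, b] from rfl,
      linearIndependent_fin_cons]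
    refine ⟨h, ?_⟩
    intro hmem
    apply hz
    have : Set.range ![a, b] = {a, b} := by
      ext x; simp [Fin.exists_fin_two, or_comm]
    rwa [this] at hmem
  have hunit : IsUnit (Matrix.of ![z, a, b]) := by
    rw [← Matrix.linearIndependent_rows_iff_isUnit]
    exact hli
  have hdet : Matrix.det ![z, a, b] ≠ 0 :=
    ((Matrix.isUnit_iff_isUnit_det _).1 hunit).ne_zero
  apply hdet
  rw [← triple_product_eq_det, hc, dotProduct_zero]

lemma cross_cross' (u v w : Fin 3 → F) :
    u ⨯₃ (v ⨯₃ w) = (u ⬝ᵥ w) • v - (u ⬝ᵥ v) • w := by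
  ext i
  fin_cases i <;>
    simp [cross_apply, dotProduct, Fin.sum_univ_three] <;> ring

lemma eq_smul_of_cross_eq_zero {w c : Fin 3 → F} (hc : c ≠ 0) (h : w ⨯₃ c = 0) :
    ∃ t : F, w = t • c := by
  by_cases hli : LinearIndependent F ![w, c]
  · exact absurd h (cross_ne_zero_of_li hli)
  · rw [linearIndependent_fin2] at hli
    push_neg at hli
    simp only [Matrix.cons_val_one, Matrix.head_cons, Matrix.cons_val_zero] at hli
    obtain ⟨t, ht⟩ := hli hc
    exact ⟨t, ht.symm⟩

lemma mem_span_cross {p q w : Fin 3 → F} (h : LinearIndependent F ![p, q])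
    (hp : w ⬝ᵥ p = 0) (hq : w ⬝ᵥ q = 0) : ∃ t : F, w = t • (p ⨯₃ q) := by
  apply eq_smul_of_cross_eq_zero (cross_ne_zero_of_li h)
  rw [cross_cross', hp, hq]
  simp

lemma rep_li {P Q : Projectivization F (Fin 3 → F)} (h : P ≠ Q) :
    LinearIndependent F ![P.rep, Q.rep] := by
  have h2 := (Projectivization.independent_pair_iff_ne P Q).2 h
  rw [Projectivization.independent_iff] at h2
  convert h2 using 1
  funext i; fin_cases i <;> rfl
  rfl

lemma ortho_comm {P Q : Projectivization F (Fin 3 → F)} (h : ortho P Q) : ortho Q P := by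
  rwa [ortho, dotProduct_comm]

lemma ortho_mk_left {x : Fin 3 → F} (hx : x ≠ 0) (P : Projectivization F (Fin 3 → F)) :
    ortho (Projectivization.mk F x hx) P ↔ x ⬝ᵥ P.rep = 0 := by
  obtain ⟨a, ha⟩ := Projectivization.exists_smul_eq_mk_rep F x hx
  rw [ortho, ← ha, Units.smul_def, smul_dotProduct, smul_eq_mul, mul_eq_zero]
  simp [a.ne_zero]

lemma ortho_mk_mk {x y : Fin 3 → F} (hx : x ≠ 0) (hy : y ≠ 0) :
    ortho (Projectivization.mk F x hx) (Projectivization.mk F y hy) ↔ x ⬝ᵥ y = 0 := by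
  rw [ortho_mk_left]
  obtain ⟨a, ha⟩ := Projectivization.exists_smul_eq_mk_rep F y hy
  rw [← ha, Units.smul_def, dotProduct_smul, smul_eq_mul, mul_eq_zero]
  simp [a.ne_zero]

/-- Uniqueness of the common orthogonal point. -/
lemma ortho_unique {P Q R S : Projectivization F (Fin 3 → F)} (hPQ : P ≠ Q)
    (hRP : ortho R P) (hRQ : ortho R Q) (hSP : ortho S P) (hSQ : ortho S Q) : R = S := by
  have hli := rep_li hPQ
  obtain ⟨t, ht⟩ := mem_span_cross hli hRP hRQ
  obtain ⟨s, hs⟩ := mem_span_cross hli hSP hSQ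
  have hs0 : s ≠ 0 := by
    rintro rfl
    exact S.rep_nonzero (by simpa using hs)
  rw [← R.mk_rep, ← S.mk_rep, Projectivization.mk_eq_mk_iff']
  refine ⟨t * s⁻¹, ?_⟩
  rw [ht, hs, smul_smul]
  congr 1
  field_simp

/-- Existence of a common orthogonal point distinct from both,
assuming the two points are distinct and non-orthogonal. -/
lemma exists_common {u v : Projectivization F (Fin 3 → F)} (huv : u ≠ v)
    (hno : ¬ ortho u v) :
    ∃ R, R ≠ u ∧ R ≠ v ∧ ortho R u ∧ ortho R v := by
  have hc : u.rep ⨯₃ v.rep ≠ 0 := cross_ne_zero_of_li (rep_li huv)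
  set R := Projectivization.mk F (u.rep ⨯₃ v.rep) hc with hR
  have horu : ortho R u := by
    rw [hR, ortho_mk_left, dotProduct_comm, dot_self_cross]
  have horv : ortho R v := by
    rw [hR, ortho_mk_left, dotProduct_comm, dot_cross_self]
  refine ⟨R, fun h => hno (h ▸ horv), fun h => hno (ortho_comm (h ▸ horu)), horu, horv⟩

lemma adj_of {u v : Projectivization F (Fin 3 → F)} (h : u ≠ v) (ho : ortho u v) :
    (polarityGraph F).Adj u v := ⟨h, ho⟩

lemma ortho_of_adj {u v : Projectivization F (Fin 3 → F)}
    (h : (polarityGraph F).Adj u v) : ortho u v := h.2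

/-- A canonical length-two walk between distinct non-adjacent vertices. -/
lemma exists_mid {u v : Projectivization F (Fin 3 → F)} (huv : u ≠ v)
    (hadj : ¬ (polarityGraph F).Adj u v) :
    ∃ R, (polarityGraph F).Adj u R ∧ (polarityGraph F).Adj R v := by
  have hno : ¬ ortho u v := fun ho => hadj ⟨huv, ho⟩
  obtain ⟨R, hRu, hRv, horu, horv⟩ := exists_common huv hno
  exact ⟨R, ⟨Ne.symm hRu, ortho_comm horu⟩, ⟨hRv, horv⟩⟩

lemma dist_eq_two {u v : Projectivization F (Fin 3 → F)} (huv : u ≠ v)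
    (hadj : ¬ (polarityGraph F).Adj u v) : (polarityGraph F).dist u v = 2 := by
  obtain ⟨R, h1, h2⟩ := exists_mid huv hadj
  have hle : (polarityGraph F).dist u v ≤ 2 := by
    have := SimpleGraph.dist_le
      (SimpleGraph.Walk.cons h1 (SimpleGraph.Walk.cons h2 SimpleGraph.Walk.nil))
    simpa using this
  have hne1 : (polarityGraph F).dist u v ≠ 1 := by
    intro h; exact hadj (SimpleGraph.dist_eq_one_iff_adj.1 h)
  have hpos : 0 < (polarityGraph F).dist u v :=
    SimpleGraph.Reachable.pos_dist_of_ne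
      (SimpleGraph.Walk.cons h1
        (SimpleGraph.Walk.cons h2 SimpleGraph.Walk.nil)).reachable huv
  omega

lemma dist_le_two' (u v : Projectivization F (Fin 3 → F)) :
    (polarityGraph F).dist u v ≤ 2 := by
  rcases eq_or_ne u v with rfl | huv
  · simp [SimpleGraph.dist_self]
  by_cases hadj : (polarityGraph F).Adj u v
  · rw [SimpleGraph.dist_eq_one_iff_adj.2 hadj]; omega
  · rw [dist_eq_two huv hadj]

end Helpers

/-- Between any two distinct vertices of `G̅_q` there is a unique minimum path; in
particular `G̅_q` contains no 4-cycle and has diameter 2. -/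
theorem polarityGraph_unique_shortest_path (q : ℕ) (hq : IsPrimePow q)
    (F : Type) [Field F] [Fintype F] (hF : Fintype.card F = q) :
    (∀ u v : Projectivization F (Fin 3 → F), u ≠ v →
      ∃! p : (polarityGraph F).Walk u v,
        p.IsPath ∧ p.length = (polarityGraph F).dist u v) ∧
    (∀ (v : Projectivization F (Fin 3 → F)) (c : (polarityGraph F).Walk v v),
      c.IsCycle → c.length ≠ 4) ∧
    (∀ u v, (polarityGraph F).dist u v ≤ 2) ∧
    (∃ u v, (polarityGraph F).dist u v = 2) := by
  classical
  refine ⟨?_, ?_, fun u v => dist_le_two' u v, ?_⟩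
  · -- unique shortest paths
    intro u v huv
    by_cases hadj : (polarityGraph F).Adj u v
    · have hdist : (polarityGraph F).dist u v = 1 := SimpleGraph.dist_eq_one_iff_adj.2 hadj
      refine ⟨SimpleGraph.Walk.cons hadj SimpleGraph.Walk.nil, ⟨?_, ?_⟩, ?_⟩
      · simp [SimpleGraph.Walk.cons_isPath_iff, hadj.ne]
      · simp [hdist]
      · rintro q ⟨hqp, hql⟩
        rw [hdist] at hql
        cases q with
        | nil => simp at hql
        | cons h p =>
          cases p with
          | nil => rfl
          | cons h' p' => simp [SimpleGraph.Walk.length_cons] at hql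
    · have hdist : (polarityGraph F).dist u v = 2 := dist_eq_two huv hadj
      obtain ⟨R, h1, h2⟩ := exists_mid huv hadj
      refine ⟨SimpleGraph.Walk.cons h1 (SimpleGraph.Walk.cons h2 SimpleGraph.Walk.nil),
        ⟨?_, ?_⟩, ?_⟩
      · simp [SimpleGraph.Walk.cons_isPath_iff]
        exact ⟨h2.ne, h1.ne, huv⟩
      · simp [hdist]
      · rintro q ⟨hqp, hql⟩
        rw [hdist] at hql
        cases q with
        | nil => simp at hql
        | @cons _ w _ ha p =>
          cases p with
          | nil => simp at hql
          | cons hb p' =>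
            cases p' with
            | nil =>
              have hw : w = R :=
                ortho_unique huv (ortho_of_adj ha.symm) (ortho_of_adj hb)
                  (ortho_of_adj h1.symm) (ortho_of_adj h2)
              subst hw
              rfl
            | cons hc p'' => simp [SimpleGraph.Walk.length_cons] at hql
  · -- no 4-cycles
    intro v c hcyc hlen
    cases c with
    | nil => simp at hlen
    | @cons _ a _ h1 p =>
      cases p with
      | nil => simp at hlen
      | @cons _ b _ h2 p =>
        cases p with
        | nil => simp at hlen
        | @cons _ d _ h3 p =>
          cases p with
          | nil => simp at hlen
          | @cons _ e _ h4 p =>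
            cases p with
            | cons h5 p' => simp [SimpleGraph.Walk.length_cons] at hlen
            | nil =>
              have hnd := hcyc.2
              simp [SimpleGraph.Walk.support_cons, List.nodup_cons] at hnd
              have hvb : v ≠ b := fun h => hnd.2.1.2 h.symm
              have had : a = d :=
                ortho_unique hvb (ortho_of_adj h1.symm) (ortho_of_adj h2)
                  (ortho_of_adj h4) (ortho_of_adj h3.symm)
              exact hnd.1.2.1 had
  · -- a pair at distance two
    have h1 : (![1, 0, 0] : Fin 3 → F) ≠ 0 := fun h => by simpa using congrFun h 0
    have h2 : (![1, 1, 0] : Fin 3 → F) ≠ 0 := fun h => by simpa using congrFun h 0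
    refine ⟨Projectivization.mk F ![1, 0, 0] h1, Projectivization.mk F ![1, 1, 0] h2, ?_⟩
    have hne : Projectivization.mk F ![1, 0, 0] h1 ≠ Projectivization.mk F ![1, 1, 0] h2 := by
      rw [Ne, Projectivization.mk_eq_mk_iff']
      rintro ⟨a, ha⟩
      have ha0 := congrFun ha 0
      have ha1 := congrFun ha 1
      simp at ha0 ha1
      rw [ha0] at ha1
      exact one_ne_zero ha1
    apply dist_eq_two hne
    intro hadj
    have ho := hadj.2
    rw [ortho_mk_mk] at ho
    simp [dotProduct, Fin.sum_univ_three] at ho
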